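/- Let s and l be positive integers and let p be an odd prime such that p ≥ l+2 and p-1 divides none of ks and ks+1 for k = 1, …, l. Then the multiple harmonic sum H({s}^l; p-1) satisfies: v_p(H({s}^l; p-1)) ≥ 1 if ls is even, and v_p(H({s}^l; p-1)) ≥ 2 if ls is odd. -/

import Mathlib

open Classical in
/-- Multiple harmonic sum `H(s₁,…,s_l; n) = ∑_{1 ≤ k₁ < ⋯ < k_l ≤ n} k₁^{-s₁} ⋯ k_l^{-s_l}`,
encoded via strictly increasing tuples of indices in `{1,…,n}` (an empty sum is `0`,
and `mhs [] n = 1`). -/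
noncomputable def mhs (s : List ℕ) (n : ℕ) : ℚ :=
  ∑ k ∈ Finset.univ.filter
      (fun k : Fin s.length → Fin (n + 1) =>
        StrictMono k ∧ ∀ i, 1 ≤ (k i : ℕ)),
    ∏ i, 1 / (((k i : ℕ) : ℚ) ^ s.get i)

open Classical in
/-- `p`-restricted multiple harmonic sum `H*(s; n)`: same sum with all indices
not divisible by `p`. -/
noncomputable def mhsStar (p : ℕ) (s : List ℕ) (n : ℕ) : ℚ :=
  ∑ k ∈ Finset.univ.filter
      (fun k : Fin s.length → Fin (n + 1) =>
        StrictMono k ∧ ∀ i, 1 ≤ (k i : ℕ) ∧ ¬ p ∣ (k i : ℕ)),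
    ∏ i, 1 / (((k i : ℕ) : ℚ) ^ s.get i)
section AuxWolstenholme

open Finset in
lemma mhs_const (s n : ℕ) (L : List ℕ) (hL : ∀ i, L.get i = s) :
    mhs L n = ∑ T ∈ (Finset.Icc 1 n).powersetCard L.length, ∏ k ∈ T, 1 / (k : ℚ) ^ s := by
  classical
  unfold mhs
  refine Finset.sum_bij (fun k _ => Finset.image (fun j => (k j : ℕ)) Finset.univ) ?_ ?_ ?_ ?_
  · intro k hk
    simp only [mem_filter, mem_univ, true_and] at hk
    rw [mem_powersetCard]
    constructor
    · intro x hx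
      rcases Finset.mem_image.1 hx with ⟨j, _, rfl⟩
      exact Finset.mem_Icc.2 ⟨hk.2 j, Nat.lt_succ_iff.1 (k j).2⟩
    · rw [Finset.card_image_of_injective _ (fun a b h => hk.1.injective (Fin.val_injective h)), card_univ,
        Fintype.card_fin]
  · intro k₁ hk₁ k₂ hk₂ he
    simp only [mem_filter, mem_univ, true_and] at hk₁ hk₂
    have h1 : StrictMono fun j => ((k₁ j : ℕ)) := fun a b hab => hk₁.1 hab
    have h2 : StrictMono fun j => ((k₂ j : ℕ)) := fun a b hab => hk₂.1 hab
    have hcard : (Finset.image (fun j => (k₁ j : ℕ)) Finset.univ).card = L.length := by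
      rw [Finset.card_image_of_injective _ (fun a b h => hk₁.1.injective (Fin.val_injective h)), card_univ, Fintype.card_fin]
    have hcard2 : (Finset.image (fun j => (k₂ j : ℕ)) Finset.univ).card = L.length := by
      rw [← he]; exact hcard
    have e1 := orderEmbOfFin_unique hcard (f := fun j => ((k₁ j : ℕ)))
      (fun x => Finset.mem_image_of_mem _ (mem_univ x)) h1
    have e2 := orderEmbOfFin_unique hcard2 (f := fun j => ((k₂ j : ℕ)))
      (fun x => Finset.mem_image_of_mem _ (mem_univ x)) h2
    funext j
    refine Fin.val_injective ?_
    have : (Finset.image (fun j => (k₁ j : ℕ)) Finset.univ).orderEmbOfFin hcard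
        = (Finset.image (fun j => (k₂ j : ℕ)) Finset.univ).orderEmbOfFin hcard2 := by
      congr 1
    rw [congrFun e1 j, congrFun e2 j, this]
  · intro T hT
    rw [mem_powersetCard] at hT
    obtain ⟨hTsub, hTcard⟩ := hT
    refine ⟨fun j => ⟨T.orderEmbOfFin hTcard j, ?_⟩, ?_, ?_⟩
    · have := hTsub (T.orderEmbOfFin_mem hTcard j)
      exact Nat.lt_succ_of_le (Finset.mem_Icc.1 this).2
    · simp only [mem_filter, mem_univ, true_and]
      constructor
      · intro a b hab
        exact Fin.mk_lt_mk.2 ((T.orderEmbOfFin hTcard).strictMono hab)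
      · intro j
        exact (Finset.mem_Icc.1 (hTsub (T.orderEmbOfFin_mem hTcard j))).1
    · dsimp only
      ext x
      simp only [Finset.mem_image, mem_univ, true_and]
      constructor
      · rintro ⟨j, rfl⟩; exact T.orderEmbOfFin_mem hTcard j
      · intro hx
        have : x ∈ Set.range (T.orderEmbOfFin hTcard) := by
          rw [range_orderEmbOfFin]; exact hx
        rcases this with ⟨j, hj⟩
        exact ⟨j, hj⟩
  · intro k hk
    simp only [mem_filter, mem_univ, true_and] at hk
    rw [Finset.prod_image (fun a _ b _ h => hk.1.injective (Fin.val_injective h))]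
    exact Finset.prod_congr rfl fun j _ => by rw [hL j]

open Finset in
lemma sum_inv_pow_eq_zero (p : ℕ) [hp : Fact p.Prime] (m : ℕ)
    (hnd : ¬ (p - 1) ∣ m) :
    ∑ k ∈ Finset.Icc 1 (p - 1), ((k : ZMod p)⁻¹) ^ m = 0 := by
  classical
  have hp1 : 1 < p := hp.out.one_lt
  have h1 : ∑ k ∈ Finset.Icc 1 (p - 1), ((k : ZMod p)⁻¹) ^ m
      = ∑ x ∈ (univ \ {0} : Finset (ZMod p)), (x⁻¹) ^ m := by
    refine Finset.sum_nbij' (fun k => (k : ZMod p)) (fun x => x.val) ?_ ?_ ?_ ?_ ?_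
    · intro k hk
      rw [mem_Icc] at hk
      simp only [mem_sdiff, mem_univ, true_and, mem_singleton]
      intro h0
      rw [ZMod.natCast_eq_zero_iff] at h0
      have hdvd := h0
      have := Nat.le_of_dvd (by omega) hdvd
      omega
    · intro x hx
      simp only [mem_sdiff, mem_univ, true_and, mem_singleton] at hx
      have h0 : x.val ≠ 0 := fun h => hx (by rwa [← ZMod.val_eq_zero])
      have hlt : x.val < p := x.val_lt
      simp only [mem_Icc]
      omega
    · intro k hk
      rw [mem_Icc] at hk
      exact ZMod.val_cast_of_lt (by omega)
    · intro x hx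
      exact ZMod.natCast_zmod_val x
    · intro k hk; rfl
  have h2 : ∑ x ∈ (univ \ {0} : Finset (ZMod p)), (x⁻¹) ^ m
      = ∑ x ∈ (univ \ {0} : Finset (ZMod p)), x ^ m := by
    refine Finset.sum_nbij' (fun x => x⁻¹) (fun x => x⁻¹) ?_ ?_ ?_ ?_ ?_
    · intro x hx
      simp only [mem_sdiff, mem_univ, true_and, mem_singleton] at hx ⊢
      exact inv_ne_zero hx
    · intro x hx
      simp only [mem_sdiff, mem_univ, true_and, mem_singleton] at hx ⊢
      exact inv_ne_zero hx
    · intro x hx; exact inv_inv x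
    · intro x hx; exact inv_inv x
    · intro x hx; rfl
  have h3 : ∑ x ∈ (univ \ {0} : Finset (ZMod p)), x ^ m
      = ∑ u : (ZMod p)ˣ, (u : ZMod p) ^ m := by
    let φ : (ZMod p)ˣ ↪ ZMod p := ⟨fun x => x, Units.val_injective⟩
    have hφ : univ.map φ = univ \ {0} := by
      ext x
      simpa only [mem_map, mem_univ, Function.Embedding.coeFn_mk, true_and, mem_sdiff,
        mem_singleton, φ] using (show (∃ a : (ZMod p)ˣ, (a : ZMod p) = x) ↔ ¬x = 0 from isUnit_iff_ne_zero)
    rw [← hφ, Finset.sum_map]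
    rfl
  rw [h1, h2, h3, FiniteField.sum_pow_units, if_neg]
  rwa [ZMod.card]

section
variable (p : ℕ) [hp : Fact p.Prime]

lemma coprime_sq_of_mem {k : ℕ} (hk : k ∈ Finset.Icc 1 (p-1)) : Nat.Coprime k (p^2) := by
  rw [Finset.mem_Icc] at hk
  refine Nat.Coprime.pow_right 2 ?_
  rw [Nat.coprime_comm]
  refine (Nat.Prime.coprime_iff_not_dvd hp.out).2 fun hdvd => ?_
  have := Nat.le_of_dvd (by omega) hdvd
  omega

lemma isUnit_cast_sq {k : ℕ} (hk : k ∈ Finset.Icc 1 (p-1)) : IsUnit (k : ZMod (p^2)) :=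
  (ZMod.isUnit_iff_coprime k (p^2)).2 (coprime_sq_of_mem p hk)

lemma isUnit_cast_p {k : ℕ} (hk : k ∈ Finset.Icc 1 (p-1)) : IsUnit (k : ZMod p) :=
  (ZMod.isUnit_iff_coprime k p).2 ((coprime_sq_of_mem p hk).coprime_dvd_right (dvd_pow_self p two_ne_zero))

noncomputable def pihom : ZMod (p^2) →+* ZMod p := ZMod.castHom (dvd_pow_self p two_ne_zero) (ZMod p)

lemma pihom_inv {k : ℕ} (hk : k ∈ Finset.Icc 1 (p-1)) :
    pihom p ((k : ZMod (p^2))⁻¹) = ((k : ZMod p))⁻¹ := by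
  refine (ZMod.inv_eq_of_mul_eq_one p _ _ ?_).symm
  have : (k : ZMod p) * pihom p ((k : ZMod (p^2))⁻¹)
      = pihom p ((k : ZMod (p^2)) * (k : ZMod (p^2))⁻¹) := by
    rw [map_mul, map_natCast]
  rw [this, ZMod.mul_inv_of_unit _ (isUnit_cast_sq p hk), map_one]

lemma pihom_zero_mul {x y : ZMod (p^2)} (hx : pihom p x = 0) (hy : pihom p y = 0) :
    x * y = 0 := by
  have hdvd : ∀ z : ZMod (p^2), pihom p z = 0 → p ∣ z.val := by
    intro z hz
    have h2 : ((z.val : ℕ) : ZMod p) = 0 := by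
      rw [← map_natCast (pihom p), ZMod.natCast_zmod_val, hz]
    exact (ZMod.natCast_eq_zero_iff _ _).1 h2
  have hx' := hdvd x hx
  have hy' := hdvd y hy
  have : x * y = ((x.val * y.val : ℕ) : ZMod (p^2)) := by
    push_cast [ZMod.natCast_zmod_val]; ring
  rw [this, ZMod.natCast_eq_zero_iff]
  conv_lhs => rw [sq]
  exact mul_dvd_mul hx' hy'

lemma p_mul_of_pihom_zero {x : ZMod (p^2)} (hx : pihom p x = 0) :
    (p : ZMod (p^2)) * x = 0 := by
  refine pihom_zero_mul p ?_ hx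
  rw [map_natCast, ZMod.natCast_self]

end

lemma one_add_pow_of_sq_zero {R : Type*} [CommRing R] (t : R) (h : t * t = 0) (m : ℕ) :
    (1 + t) ^ m = 1 + m * t := by
  induction m with
  | zero => simp
  | succ n ih =>
    rw [pow_succ, ih]
    push_cast
    ring_nf
    linear_combination (↑n : R) * h

open Finset in
lemma sum_inv_pow_sq_eq_zero (p : ℕ) [hp : Fact p.Prime] (hodd : Odd p) (m : ℕ) (hm : Odd m)
    (h1 : ¬ (p - 1) ∣ (m + 1)) :
    ∑ k ∈ Finset.Icc 1 (p - 1), ((k : ZMod (p^2))⁻¹) ^ m = 0 := by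
  classical
  have hp2 : 2 < p := by
    rcases hp.out.two_le.lt_or_eq with h | h
    · exact h
    · exfalso; rw [← h] at hodd; exact (by decide : ¬ Odd 2) hodd
  have hq : (p : ZMod (p^2)) * (p : ZMod (p^2)) = 0 := by
    rw [← Nat.cast_mul, ← sq, ZMod.natCast_self]
  set R := ZMod (p^2) with hR
  set S : R := ∑ k ∈ Finset.Icc 1 (p - 1), ((k : R)⁻¹) ^ m with hS
  set T : R := ∑ k ∈ Finset.Icc 1 (p - 1), ((k : R)⁻¹) ^ (m + 1) with hT
  have key : ∀ k ∈ Finset.Icc 1 (p-1), (((p - k : ℕ) : R)⁻¹) ^ m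
      = -(((k : R)⁻¹) ^ m) - (m : R) * (p : R) * ((k : R)⁻¹) ^ (m + 1) := by
    intro k hk
    rw [Finset.mem_Icc] at hk
    have hu : (k : R) * (k : R)⁻¹ = 1 :=
      ZMod.mul_inv_of_unit _ (isUnit_cast_sq p (Finset.mem_Icc.2 hk))
    have hcast : ((p - k : ℕ) : R) = (p : R) - (k : R) := by
      push_cast [Nat.cast_sub (by omega : k ≤ p)]; ring
    have hinv : ((p : R) - (k : R))⁻¹ = -((k:R)⁻¹ + (p:R) * ((k:R)⁻¹ * (k:R)⁻¹)) := by
      refine ZMod.inv_eq_of_mul_eq_one _ _ _ ?_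
      linear_combination (-((k:R)⁻¹ * (k:R)⁻¹)) * hq + (1 + (p:R) * (k:R)⁻¹) * hu
    calc (((p - k : ℕ) : R)⁻¹) ^ m
        = (-((k:R)⁻¹ * (1 + (p:R) * (k:R)⁻¹))) ^ m := by
          rw [hcast, hinv]; simp only [R]; ring_nf
      _ = -(((k:R)⁻¹) ^ m * ((1 + (p:R) * (k:R)⁻¹)) ^ m) := by
          rw [hm.neg_pow, mul_pow]
      _ = -(((k:R)⁻¹) ^ m * (1 + (m : R) * ((p:R) * (k:R)⁻¹))) := by
          rw [one_add_pow_of_sq_zero ((p:R) * (k:R)⁻¹) (by simp only [R]; linear_combination ((k:R)⁻¹ * (k:R)⁻¹) * hq) m]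
      _ = -(((k : R)⁻¹) ^ m) - (m : R) * (p : R) * ((k : R)⁻¹) ^ (m + 1) := by
          simp only [R]; ring
  have hre : S = ∑ k ∈ Finset.Icc 1 (p-1), (((p - k : ℕ) : R)⁻¹) ^ m := by
    rw [hS]
    refine Finset.sum_nbij' (fun k => p - k) (fun k => p - k) ?_ ?_ ?_ ?_ ?_
    · intro a ha; simp only [Finset.mem_Icc] at ha; simp only [Finset.mem_Icc]; omega
    · intro a ha; simp only [Finset.mem_Icc] at ha; simp only [Finset.mem_Icc]; omega
    · intro a ha; simp only [Finset.mem_Icc] at ha; omega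
    · intro a ha; simp only [Finset.mem_Icc] at ha; omega
    · intro a ha
      simp only [Finset.mem_Icc] at ha
      have : p - (p - a) = a := by omega
      rw [this]
  have hTpi : pihom p T = 0 := by
    rw [hT, map_sum]
    have : ∀ k ∈ Finset.Icc 1 (p-1), pihom p (((k : R)⁻¹) ^ (m+1)) = ((k : ZMod p)⁻¹) ^ (m+1) := by
      intro k hk
      rw [map_pow, pihom_inv p hk]
    rw [Finset.sum_congr rfl this]
    exact sum_inv_pow_eq_zero p (m+1) h1
  have hpT : (p : R) * T = 0 := p_mul_of_pihom_zero p hTpi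
  have hSS : S = -S - (m : R) * ((p : R) * T) := by
    calc S = ∑ k ∈ Finset.Icc 1 (p-1), (((p - k : ℕ) : R)⁻¹) ^ m := hre
      _ = ∑ k ∈ Finset.Icc 1 (p-1),
            (-(((k : R)⁻¹) ^ m) - (m : R) * (p : R) * ((k : R)⁻¹) ^ (m + 1)) :=
          Finset.sum_congr rfl key
      _ = -S - (m : R) * ((p : R) * T) := by
          rw [Finset.sum_sub_distrib, ← Finset.mul_sum, ← hT, mul_assoc, Finset.sum_neg_distrib,
            ← hS]
  rw [hpT, mul_zero, sub_zero] at hSS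
  have h2S : (2 : R) * S = 0 := by
    rw [two_mul]
    nth_rewrite 1 [hSS]
    ring
  have hu2 : IsUnit (2 : R) := by
    have : IsUnit ((2 : ℕ) : R) := (ZMod.isUnit_iff_coprime 2 (p^2)).2
      (Nat.coprime_two_left.2 (hodd.pow))
    simpa using this
  exact hu2.mul_left_cancel (by rw [h2S, mul_zero])

open Finset MvPolynomial in
lemma newton_spec {R : Type*} [CommRing R] (s : Finset ℕ) (f : ℕ → R) (j : ℕ) :
    (j : R) * (∑ T ∈ s.powersetCard j, ∏ k ∈ T, f k)
      = (-1 : R) ^ (j + 1) * ∑ a ∈ (Finset.HasAntidiagonal.antidiagonal j).filter (fun a => a.1 < j),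
          (-1 : R) ^ a.1 * (∑ T ∈ s.powersetCard a.1, ∏ k ∈ T, f k) * (∑ k ∈ s, f k ^ a.2) := by
  classical
  have hmain := MvPolynomial.mul_esymm_eq_sum (↥s) R j
  have := congrArg (MvPolynomial.aeval (fun i : ↥s => f i)) hmain
  have hesymm : ∀ i : ℕ, MvPolynomial.aeval (fun i : ↥s => f i) (esymm (↥s) R i)
      = ∑ T ∈ s.powersetCard i, ∏ k ∈ T, f k := by
    intro i
    rw [MvPolynomial.aeval_esymm_eq_multiset_esymm]
    have h1 : (Finset.univ.val.map (fun i : ↥s => f i)) = s.val.map f := by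
      rw [Finset.univ_eq_attach]
      have : (s.attach.val.map (fun i : ↥s => f i)) = s.val.attach.map (fun i => f i.val) := rfl
      rw [this, Multiset.attach_map_val']
    rw [h1, Finset.esymm_map_val]
  have hpsum : ∀ i : ℕ, MvPolynomial.aeval (fun i : ↥s => f i) (psum (↥s) R i)
      = ∑ k ∈ s, f k ^ i := by
    intro i
    rw [psum, map_sum]
    simp only [map_pow, aeval_X]
    rw [Finset.univ_eq_attach, Finset.sum_attach s (fun k => f k ^ i)]
  have hsum : MvPolynomial.aeval (fun i : ↥s => f i)
      (∑ a ∈ (Finset.HasAntidiagonal.antidiagonal j).filter (fun a => a.1 < j),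
        (-1 : MvPolynomial (↥s) R) ^ a.1 * esymm (↥s) R a.1 * psum (↥s) R a.2)
      = ∑ a ∈ (Finset.HasAntidiagonal.antidiagonal j).filter (fun a => a.1 < j),
          (-1 : R) ^ a.1 * (∑ T ∈ s.powersetCard a.1, ∏ k ∈ T, f k) * (∑ k ∈ s, f k ^ a.2) := by
    rw [map_sum]
    refine Finset.sum_congr rfl fun a _ => ?_
    rw [map_mul, map_mul, map_pow, map_neg, map_one, hesymm, hpsum]
  rw [map_mul, map_mul, map_pow, map_neg, map_one, map_natCast, hesymm j, hsum] at this
  exact this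


open Finset in
lemma pihom_E (p : ℕ) [hp : Fact p.Prime] (s i : ℕ) :
    pihom p (∑ T ∈ (Finset.Icc 1 (p-1)).powersetCard i, ∏ k ∈ T, ((k : ZMod (p^2))⁻¹) ^ s)
      = ∑ T ∈ (Finset.Icc 1 (p-1)).powersetCard i, ∏ k ∈ T, ((k : ZMod p)⁻¹) ^ s := by
  rw [map_sum]
  refine Finset.sum_congr rfl fun T hT => ?_
  rw [map_prod]
  refine Finset.prod_congr rfl fun k hk => ?_
  rw [map_pow, pihom_inv p ((Finset.mem_powersetCard.1 hT).1 hk)]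

open Finset in
lemma isUnit_small (p : ℕ) [hp : Fact p.Prime] {j e : ℕ} (hj1 : 1 ≤ j) (hjp : j < p) :
    IsUnit (j : ZMod (p^e)) := by
  refine (ZMod.isUnit_iff_coprime j (p^e)).2 (Nat.Coprime.pow_right e ?_)
  rw [Nat.coprime_comm]
  refine (Nat.Prime.coprime_iff_not_dvd hp.out).2 fun hdvd => ?_
  have := Nat.le_of_dvd (by omega) hdvd
  omega

open Finset in
lemma E_p_zero (p : ℕ) [hp : Fact p.Prime] (s : ℕ) {l : ℕ} (hpl : l + 2 ≤ p)
    (hdiv : ∀ k, 1 ≤ k → k ≤ l → ¬ (p - 1) ∣ (k * s)) :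
    ∀ j, 1 ≤ j → j ≤ l →
      ∑ T ∈ (Finset.Icc 1 (p-1)).powersetCard j, ∏ k ∈ T, ((k : ZMod p)⁻¹) ^ s = 0 := by
  intro j hj1 hjl
  have hnewton := newton_spec (Finset.Icc 1 (p-1)) (fun k => ((k : ZMod p)⁻¹) ^ s) j
  have hPzero : ∀ i, 1 ≤ i → i ≤ l →
      ∑ k ∈ Finset.Icc 1 (p-1), (((k : ZMod p)⁻¹) ^ s) ^ i = 0 := by
    intro i hi1 hil
    have : ∀ k ∈ Finset.Icc 1 (p-1), (((k : ZMod p)⁻¹) ^ s) ^ i = ((k : ZMod p)⁻¹) ^ (s * i) :=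
      fun k _ => by rw [← pow_mul]
    rw [Finset.sum_congr rfl this]
    exact sum_inv_pow_eq_zero p (s * i) (by rw [mul_comm]; exact hdiv i hi1 hil)
  have hrhs : ∑ a ∈ (Finset.HasAntidiagonal.antidiagonal j).filter (fun a => a.1 < j),
      (-1 : ZMod p) ^ a.1 * (∑ T ∈ (Finset.Icc 1 (p-1)).powersetCard a.1, ∏ k ∈ T,
        ((k : ZMod p)⁻¹) ^ s) * (∑ k ∈ Finset.Icc 1 (p-1), (((k : ZMod p)⁻¹) ^ s) ^ a.2) = 0 := by
    refine Finset.sum_eq_zero fun a ha => ?_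
    simp only [Finset.mem_filter, Finset.HasAntidiagonal.mem_antidiagonal] at ha
    rw [hPzero a.2 (by omega) (by omega), mul_zero]
  rw [hrhs, mul_zero] at hnewton
  have hu := isUnit_small p (e := 1) hj1 (by omega)
  rw [pow_one] at hu
  exact hu.mul_left_cancel (by rw [hnewton, mul_zero])

open Finset in
lemma E_p2_zero (p : ℕ) [hp : Fact p.Prime] (hodd : Odd p) (s : ℕ) {l : ℕ}
    (hl : 0 < l) (hpl : l + 2 ≤ p)
    (hdiv : ∀ k, 1 ≤ k → k ≤ l → ¬ (p - 1) ∣ (k * s) ∧ ¬ (p - 1) ∣ (k * s + 1))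
    (hparity : Odd (l * s)) :
    ∑ T ∈ (Finset.Icc 1 (p-1)).powersetCard l, ∏ k ∈ T, ((k : ZMod (p^2))⁻¹) ^ s = 0 := by
  have hnewton := newton_spec (Finset.Icc 1 (p-1)) (fun k => ((k : ZMod (p^2))⁻¹) ^ s) l
  have hpow : ∀ (R : Type) [CommRing R] (g : ℕ → R) (i : ℕ),
      ∑ k ∈ Finset.Icc 1 (p-1), ((g k) ^ s) ^ i = ∑ k ∈ Finset.Icc 1 (p-1), (g k) ^ (s * i) :=
    fun R _ g i => Finset.sum_congr rfl fun k _ => by rw [← pow_mul]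
  have hpiE := fun i => pihom_E p s i
  have hpiP : ∀ i, pihom p (∑ k ∈ Finset.Icc 1 (p-1), (((k : ZMod (p^2))⁻¹) ^ s) ^ i)
      = ∑ k ∈ Finset.Icc 1 (p-1), (((k : ZMod p)⁻¹) ^ s) ^ i := by
    intro i
    rw [map_sum]
    refine Finset.sum_congr rfl fun k hk => ?_
    rw [map_pow, map_pow, pihom_inv p hk]
  have hrhs : ∑ a ∈ (Finset.HasAntidiagonal.antidiagonal l).filter (fun a => a.1 < l),
      (-1 : ZMod (p^2)) ^ a.1 * (∑ T ∈ (Finset.Icc 1 (p-1)).powersetCard a.1, ∏ k ∈ T,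
        ((k : ZMod (p^2))⁻¹) ^ s)
        * (∑ k ∈ Finset.Icc 1 (p-1), (((k : ZMod (p^2))⁻¹) ^ s) ^ a.2) = 0 := by
    refine Finset.sum_eq_zero fun a ha => ?_
    simp only [Finset.mem_filter, Finset.HasAntidiagonal.mem_antidiagonal] at ha
    rcases Nat.eq_zero_or_pos a.1 with h0 | h0
    · -- a = (0, l): the power sum vanishes mod p²
      have ha2 : a.2 = l := by omega
      have : ∑ k ∈ Finset.Icc 1 (p-1), (((k : ZMod (p^2))⁻¹) ^ s) ^ a.2 = 0 := by
        rw [ha2, hpow]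
        exact sum_inv_pow_sq_eq_zero p hodd (s * l) (by rwa [mul_comm] : Odd (s * l))
          (by rw [mul_comm]; exact (hdiv l hl le_rfl).2)
      rw [this, mul_zero]
    · -- a.1 ≥ 1 : both factors are ≡ 0 mod p
      have hE : pihom p (∑ T ∈ (Finset.Icc 1 (p-1)).powersetCard a.1, ∏ k ∈ T,
          ((k : ZMod (p^2))⁻¹) ^ s) = 0 := by
        rw [hpiE]
        exact E_p_zero p s hpl (fun k h1 h2 => (hdiv k h1 h2).1) a.1 h0 (by omega)
      have hP : pihom p (∑ k ∈ Finset.Icc 1 (p-1), (((k : ZMod (p^2))⁻¹) ^ s) ^ a.2) = 0 := by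
        rw [hpiP, hpow]
        exact sum_inv_pow_eq_zero p (s * a.2)
          (by rw [mul_comm]; exact (hdiv a.2 (by omega) (by omega)).1)
      rw [mul_assoc, pihom_zero_mul p hE hP, mul_zero]
  rw [hrhs, mul_zero] at hnewton
  exact (isUnit_small p (e := 2) hl (by omega)).mul_left_cancel (by rw [hnewton, mul_zero])

section lifting
variable (p : ℕ) [hp : Fact p.Prime] (s l : ℕ)

/-- the integer `H({s}^l; p-1) · ((p-1)!)^{ls}` -/
noncomputable def Mnum : ℕ :=
  ∑ T ∈ (Finset.Icc 1 (p-1)).powersetCard l, ∏ k ∈ T, ((p-1).factorial / k) ^ s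

lemma fact_dvd_of_mem {k : ℕ} (hk : k ∈ Finset.Icc 1 (p-1)) : k ∣ (p-1).factorial := by
  rw [Finset.mem_Icc] at hk
  exact Nat.dvd_factorial (by omega) hk.2

lemma Mnum_cast_rat :
    (Mnum p s l : ℚ) = mhs (List.replicate l s) (p-1) * ((p-1).factorial : ℚ) ^ (l * s) := by
  rw [mhs_const s (p-1) _ (fun i => List.getElem_replicate _), List.length_replicate]
  rw [Mnum, Nat.cast_sum, Finset.sum_mul]
  refine Finset.sum_congr rfl fun T hT => ?_
  obtain ⟨hTsub, hTcard⟩ := Finset.mem_powersetCard.1 hT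
  push_cast
  have hterm : ∀ k ∈ T, (((p-1).factorial / k : ℕ) : ℚ) ^ s
      = ((p-1).factorial : ℚ) ^ s * (1 / (k : ℚ) ^ s) := by
    intro k hk
    have hdvd := fact_dvd_of_mem p (hTsub hk)
    have hk0 : (k : ℚ) ≠ 0 := by
      have := Finset.mem_Icc.1 (hTsub hk); exact_mod_cast (by omega : (k:ℕ) ≠ 0)
    rw [Nat.cast_div hdvd hk0, div_pow, div_eq_mul_one_div]
  rw [Finset.prod_congr rfl hterm, Finset.prod_mul_distrib, Finset.prod_const, hTcard,
    ← pow_mul, mul_comm s l, mul_comm]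

lemma Mnum_cast_zmod :
    (Mnum p s l : ZMod (p^2)) = ((p-1).factorial : ZMod (p^2)) ^ (l * s)
      * ∑ T ∈ (Finset.Icc 1 (p-1)).powersetCard l, ∏ k ∈ T, ((k : ZMod (p^2))⁻¹) ^ s := by
  rw [Mnum, Nat.cast_sum, Finset.mul_sum]
  refine Finset.sum_congr rfl fun T hT => ?_
  obtain ⟨hTsub, hTcard⟩ := Finset.mem_powersetCard.1 hT
  push_cast
  have hterm : ∀ k ∈ T, (((p-1).factorial / k : ℕ) : ZMod (p^2)) ^ s
      = ((p-1).factorial : ZMod (p^2)) ^ s * ((k : ZMod (p^2))⁻¹) ^ s := by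
    intro k hk
    have hdvd := fact_dvd_of_mem p (hTsub hk)
    have hu : (k : ZMod (p^2)) * (k : ZMod (p^2))⁻¹ = 1 :=
      ZMod.mul_inv_of_unit _ (isUnit_cast_sq p (hTsub hk))
    have hx : (((p-1).factorial / k : ℕ) : ZMod (p^2)) * (k : ZMod (p^2))
        = ((p-1).factorial : ZMod (p^2)) := by
      rw [← Nat.cast_mul, Nat.div_mul_cancel hdvd]
    have : (((p-1).factorial / k : ℕ) : ZMod (p^2))
        = ((p-1).factorial : ZMod (p^2)) * (k : ZMod (p^2))⁻¹ := by
      calc (((p-1).factorial / k : ℕ) : ZMod (p^2))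
          = (((p-1).factorial / k : ℕ) : ZMod (p^2)) * ((k : ZMod (p^2)) * (k : ZMod (p^2))⁻¹) := by
            rw [hu, mul_one]
        _ = ((p-1).factorial : ZMod (p^2)) * (k : ZMod (p^2))⁻¹ := by rw [← mul_assoc, hx]
    rw [this, mul_pow]
  rw [Finset.prod_congr rfl hterm, Finset.prod_mul_distrib, Finset.prod_const, hTcard,
    ← pow_mul, mul_comm s l]

end lifting


end AuxWolstenholme

/-- Wolstenholme type theorem for homogeneous multiple harmonic sums:
if `p` is an odd prime, `p ≥ l+2` and `p-1` divides none of `ks`, `ks+1` for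
`k = 1,…,l`, then `v_p(H({s}^l; p-1)) ≥ 1` if `ls` is even and `≥ 2` if `ls` is odd
(with `v_p(0) = ∞`). -/
theorem stmt0 (s l p : ℕ) (hs : 0 < s) (hl : 0 < l) (hp : p.Prime) (hodd : Odd p)
    (hpl : l + 2 ≤ p)
    (hdiv : ∀ k, 1 ≤ k → k ≤ l → ¬ (p - 1) ∣ (k * s) ∧ ¬ (p - 1) ∣ (k * s + 1)) :
    (Even (l * s) →
      (mhs (List.replicate l s) (p - 1) = 0 ∨
        1 ≤ padicValRat p (mhs (List.replicate l s) (p - 1)))) ∧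
    (Odd (l * s) →
      (mhs (List.replicate l s) (p - 1) = 0 ∨
        2 ≤ padicValRat p (mhs (List.replicate l s) (p - 1)))) := by
  haveI : Fact p.Prime := ⟨hp⟩
  by_cases hQ0 : mhs (List.replicate l s) (p - 1) = 0
  · exact ⟨fun _ => Or.inl hQ0, fun _ => Or.inl hQ0⟩
  have hfact0 : ((p-1).factorial : ℚ) ≠ 0 := by
    exact_mod_cast (p-1).factorial_pos.ne'
  have hc0 : ((p-1).factorial : ℚ) ^ (l * s) ≠ 0 := pow_ne_zero _ hfact0
  have hM := Mnum_cast_rat p s l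
  have hMne : Mnum p s l ≠ 0 := by
    intro h
    rw [h] at hM
    exact hQ0 (by
      rcases mul_eq_zero.1 hM.symm with h' | h'
      · exact h'
      · exact absurd h' hc0)
  have hval : padicValRat p (mhs (List.replicate l s) (p - 1)) = padicValNat p (Mnum p s l) := by
    have hQeq : mhs (List.replicate l s) (p - 1)
        = (Mnum p s l : ℚ) / ((p-1).factorial : ℚ) ^ (l * s) := by
      rw [eq_div_iff hc0]; exact hM.symm
    rw [hQeq, padicValRat.div (by exact_mod_cast hMne) hc0, padicValRat.of_nat]
    have hcs : ((p-1).factorial : ℚ) ^ (l * s) = (((p-1).factorial ^ (l * s) : ℕ) : ℚ) := by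
      push_cast; ring
    rw [hcs, padicValRat.of_nat]
    have hnd : ¬ p ∣ (p-1).factorial ^ (l * s) := by
      intro h
      have h2 := hp.dvd_of_dvd_pow h
      rw [Nat.Prime.dvd_factorial hp] at h2
      omega
    rw [padicValNat.eq_zero_of_not_dvd hnd]
    simp
  constructor
  · intro _
    right
    rw [hval]
    have hdvd : p ^ 1 ∣ Mnum p s l := by
      rw [pow_one, ← ZMod.natCast_eq_zero_iff]
      have h2 := congrArg (pihom p) (Mnum_cast_zmod p s l)
      rw [map_natCast, map_mul, map_pow, map_natCast, pihom_E,
        E_p_zero p s hpl (fun k h1 h2 => (hdiv k h1 h2).1) l hl le_rfl, mul_zero] at h2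
      exact h2
    have := (padicValNat_dvd_iff_le hMne).1 hdvd
    exact_mod_cast this
  · intro hoddls
    right
    rw [hval]
    have hdvd : p ^ 2 ∣ Mnum p s l := by
      rw [← ZMod.natCast_eq_zero_iff]
      rw [Mnum_cast_zmod p s l, E_p2_zero p hodd s hl hpl hdiv hoddls, mul_zero]
    have := (padicValNat_dvd_iff_le hMne).1 hdvd
    exact_mod_cast this
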